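/- arXiv:0904.0177 — 2 statements merged into one kernel-verified Lean document; each statement's English description precedes it below -/
import Mathlib

section
/- Let a₀ ∈ Pₙ and h ∈ Sₙ, and define a(t) := a₀ · exp(t · a₀⁻¹ h) for t ∈ ℝ. Then a(t) is a symmetric positive definite matrix for every t ∈ ℝ, a(0) = a₀, a'(0) = h, and a satisfies the geodesic equation a''(t) = a'(t) · a(t)⁻¹ · a'(t) for all t ∈ ℝ. (These are the geodesics of the Riemannian metric ⟨·,·⟩ on Pₙ.) -/
open Matrix

noncomputable section

abbrev Mat (n : ℕ) : Type := Matrix (Fin n) (Fin n) ℝ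

instance (n : ℕ) : NormedAddCommGroup (Mat n) := Matrix.normedAddCommGroup
instance (n : ℕ) : NormedSpace ℝ (Mat n) := Matrix.normedSpace

/-- Membership in `Pₙ`: symmetric positive definite. -/
def InP (n : ℕ) (A : Mat n) : Prop := A.IsSymm ∧ A.PosDef

end

/-- Over ℝ, `Mᵀ * M` is positive definite when `M` is invertible. -/
private lemma aux_posDef_transpose_mul_self {k : ℕ} (M : Mat k) (hM : IsUnit M) :
    (Mᴴ * M).PosDef := by
  exact Matrix.PosDef.conjTranspose_mul_self M (Matrix.mulVec_injective_iff_isUnit.mpr hM)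

open scoped MatrixOrder in
private lemma aux_sqrt {k : ℕ} (A : Mat k) (hA : A.PosSemidef) :
    ∃ S : Mat k, S * S = A ∧ Sᵀ = S := by
  have h0 : 0 ≤ A := hA.nonneg
  refine ⟨CFC.sqrt A, CFC.sqrt_mul_sqrt_self A h0, ?_⟩
  have := (CFC.sqrt_nonneg A).posSemidef.1
  rwa [Matrix.IsHermitian, Matrix.conjTranspose_eq_transpose_of_trivial] at this

/-- Entrywise derivative of `u ↦ B * exp(u • M) * C`. -/
private lemma aux_entry_hasDerivAt {k : ℕ} (M B C : Matrix (Fin k) (Fin k) ℝ) (t : ℝ)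
    (i j : Fin k) :
    HasDerivAt (fun u : ℝ => (B * NormedSpace.exp (u • M) * C) i j)
      ((B * (NormedSpace.exp (t • M) * M) * C) i j) t := by
  letI : NormedAddCommGroup (Matrix (Fin k) (Fin k) ℝ) := Matrix.linftyOpNormedAddCommGroup
  letI : SeminormedRing (Matrix (Fin k) (Fin k) ℝ) := Matrix.linftyOpSemiNormedRing
  letI : NormedRing (Matrix (Fin k) (Fin k) ℝ) := Matrix.linftyOpNormedRing
  letI : NormedSpace ℝ (Matrix (Fin k) (Fin k) ℝ) := Matrix.linftyOpNormedSpace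
  letI : NormedAlgebra ℝ (Matrix (Fin k) (Fin k) ℝ) := Matrix.linftyOpNormedAlgebra
  have h2 := ((hasDerivAt_exp_smul_const (𝕂 := ℝ)
      (𝔸 := Matrix (Fin k) (Fin k) ℝ) M t).const_mul B).mul_const C
  let L : Matrix (Fin k) (Fin k) ℝ →ₗ[ℝ] ℝ :=
    { toFun := fun A => A i j, map_add' := fun _ _ => rfl, map_smul' := fun _ _ => rfl }
  exact (LinearMap.toContinuousLinearMap L).hasFDerivAt.comp_hasDerivAt t h2

/-- Derivative of `u ↦ B * exp(u • M) * C` with respect to the (sup-)norm on `Mat k`. -/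
private lemma aux_hasDerivAt {k : ℕ} (M B C : Mat k) (t : ℝ) :
    HasDerivAt (fun u : ℝ => B * NormedSpace.exp (u • M) * C)
      (B * (NormedSpace.exp (t • M) * M) * C) t :=
  hasDerivAt_pi.mpr fun i => hasDerivAt_pi.mpr fun j => aux_entry_hasDerivAt M B C t i j

/-- For `a₀ ∈ Pₙ`, `h ∈ Sₙ` and `a(t) := a₀ · exp(t · a₀⁻¹ h)`, the matrix `a(t)` is
symmetric positive definite for all `t`, `a(0) = a₀`, `a'(0) = h`, and `a` satisfies
the geodesic equation `a''(t) = a'(t) a(t)⁻¹ a'(t)`. -/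
theorem stmt_0 (n : ℕ) (hn : 1 ≤ n) (a₀ h : Mat n) (ha₀ : InP n a₀) (hh : h.IsSymm)
    (a : ℝ → Mat n) (ha : ∀ t : ℝ, a t = a₀ * NormedSpace.exp (t • (a₀⁻¹ * h))) :
    (∀ t : ℝ, InP n (a t)) ∧ a 0 = a₀ ∧ deriv a 0 = h ∧
      ∀ t : ℝ, deriv (deriv a) t = deriv a t * (a t)⁻¹ * deriv a t := by
  obtain ⟨ha₀s, ha₀p⟩ := ha₀
  have haf : a = fun t : ℝ => a₀ * NormedSpace.exp (t • (a₀⁻¹ * h)) := funext ha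
  subst haf
  set m : Mat n := a₀⁻¹ * h with hm
  have hdet : IsUnit a₀.det := (Matrix.isUnit_iff_isUnit_det _).mp ha₀p.isUnit
  have ha₀invT : (a₀⁻¹)ᵀ = a₀⁻¹ := by
    rw [Matrix.transpose_nonsing_inv, ha₀s]
  -- derivatives
  have hda : ∀ t : ℝ, HasDerivAt (fun u : ℝ => a₀ * NormedSpace.exp (u • m))
      (a₀ * NormedSpace.exp (t • m) * m) t := by
    intro t
    simpa only [mul_one, ← mul_assoc] using aux_hasDerivAt m a₀ 1 t
  have hd1 : deriv (fun u : ℝ => a₀ * NormedSpace.exp (u • m))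
      = fun t : ℝ => a₀ * NormedSpace.exp (t • m) * m :=
    funext fun t => (hda t).deriv
  have hdda : ∀ t : ℝ, HasDerivAt (fun u : ℝ => a₀ * NormedSpace.exp (u • m) * m)
      (a₀ * NormedSpace.exp (t • m) * m * m) t := by
    intro t
    simpa only [← mul_assoc] using aux_hasDerivAt m a₀ m t
  -- symmetry of a t
  have hsymm : ∀ t : ℝ, (a₀ * NormedSpace.exp (t • m)).IsSymm := by
    intro t
    have hmt : (t • m)ᵀ = a₀ * (t • m) * a₀⁻¹ := by
      rw [hm, Matrix.transpose_smul, Matrix.transpose_mul, hh, ha₀invT,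
        Matrix.mul_smul, Matrix.smul_mul, Matrix.mul_nonsing_inv_cancel_left _ _ hdet]
    show (a₀ * NormedSpace.exp (t • m))ᵀ = _
    rw [Matrix.transpose_mul, ha₀s, ← Matrix.exp_transpose, hmt,
      Matrix.exp_conj _ _ ha₀p.isUnit, Matrix.mul_assoc,
      Matrix.nonsing_inv_mul _ hdet, Matrix.mul_one]
  -- positive definiteness of a t
  have hpos : ∀ t : ℝ, (a₀ * NormedSpace.exp (t • m)).PosDef := by
    intro t
    obtain ⟨S, hSS, hSsymm⟩ := aux_sqrt a₀ ha₀p.posSemidef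
    have hSdet : IsUnit S.det := by
      have hdet2 : S.det * S.det = a₀.det := by rw [← Matrix.det_mul, hSS]
      have : S.det ≠ 0 := by
        intro h0
        rw [h0, mul_zero] at hdet2
        exact ha₀p.det_pos.ne' hdet2.symm
      exact this.isUnit
    have hSu : IsUnit S := (Matrix.isUnit_iff_isUnit_det _).mpr hSdet
    have hSinvT : (S⁻¹)ᵀ = S⁻¹ := by rw [Matrix.transpose_nonsing_inv, hSsymm]
    set c : Mat n := S⁻¹ * h * S⁻¹ with hc
    -- a t = S * exp (t • c) * S
    have key : a₀ * NormedSpace.exp (t • m) = S * NormedSpace.exp (t • c) * S := by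
      have h1 : t • c = S * (t • m) * S⁻¹ := by
        rw [hm, hc, ← hSS, Matrix.mul_inv_rev, Matrix.mul_smul, Matrix.smul_mul]
        congr 1
        rw [← Matrix.mul_assoc S, ← Matrix.mul_assoc S,
          Matrix.mul_nonsing_inv _ hSdet, Matrix.one_mul]
      rw [h1, Matrix.exp_conj _ _ hSu, ← Matrix.mul_assoc, ← Matrix.mul_assoc, hSS,
        Matrix.mul_assoc _ (S⁻¹) S, Matrix.nonsing_inv_mul _ hSdet, Matrix.mul_one]
    have hcsymm : cᵀ = c := by
      rw [hc, Matrix.transpose_mul, Matrix.transpose_mul, hSinvT, hh, Matrix.mul_assoc]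
    set E : Mat n := NormedSpace.exp ((t / 2) • c) with hE
    have hEsymm : Eᵀ = E := by
      rw [hE, ← Matrix.exp_transpose, Matrix.transpose_smul, hcsymm]
    have hEE : E * E = NormedSpace.exp (t • c) := by
      rw [hE, ← Matrix.exp_add_of_commute _ _ (Commute.refl _), ← add_smul]
      norm_num
    have hfact : a₀ * NormedSpace.exp (t • m) = (E * S)ᴴ * (E * S) := by
      rw [Matrix.conjTranspose_eq_transpose_of_trivial, Matrix.transpose_mul, hSsymm, hEsymm,
        key, ← hEE]
      rw [Matrix.mul_assoc, Matrix.mul_assoc, Matrix.mul_assoc]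
    rw [hfact]
    exact aux_posDef_transpose_mul_self (E * S) ((Matrix.isUnit_exp _).mul hSu)
  refine ⟨fun t => ⟨hsymm t, hpos t⟩, ?_, ?_, ?_⟩
  · simp [NormedSpace.exp_zero]
  · rw [hd1]
    simp only [zero_smul, NormedSpace.exp_zero, Matrix.mul_one, hm]
    rw [← Matrix.mul_assoc, Matrix.mul_nonsing_inv _ hdet, Matrix.one_mul]
  · intro t
    rw [hd1]
    erw [(hdda t).deriv]
    have hinv : (a₀ * NormedSpace.exp (t • m))⁻¹
        = NormedSpace.exp (-(t • m)) * a₀⁻¹ := by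
      rw [Matrix.mul_inv_rev, Matrix.exp_neg]
    rw [hinv]
    have hcomm : m * NormedSpace.exp (-(t • m)) = NormedSpace.exp (-(t • m)) * m :=
      (((Commute.refl m).smul_right t).neg_right.exp_right).eq
    have hEE' : NormedSpace.exp (-(t • m)) * NormedSpace.exp (t • m) = 1 := by
      rw [← Matrix.exp_add_of_commute _ _ (Commute.refl (t • m)).neg_left,
        neg_add_cancel, NormedSpace.exp_zero]
    have hE'E : NormedSpace.exp (-(t • m)) * (NormedSpace.exp (t • m) * m) = m := by
      rw [← Matrix.mul_assoc, hEE', Matrix.one_mul]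
    simp only [Matrix.mul_assoc]
    rw [Matrix.nonsing_inv_mul_cancel_left _ _ hdet, hE'E]
end

section
/- Let X be a compact topological space equipped with a finite Borel measure μ, let g : X → Pₙ and h : X → Pₙ be continuous, and let g₀ : X → Sₙ be continuous with g₀(x) positive semidefinite for all x. For t ∈ (0,1] set g_t(x) := g₀(x) + t·h(x). Then the improper integral ∫₀¹ ( ∫_X tr((g_t(x)⁻¹ h(x))²) · √(det(g(x)⁻¹ g_t(x))) dμ(x) )^{1/2} dt is finite. (This is the finiteness of the length of the linear path g_t = g₀ + t h joining a smooth semimetric on the boundary of the space of metrics to a metric.) -/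
open Matrix

noncomputable section

/-- The smallest (real) eigenvalue of a matrix. -/
def lamMin (n : ℕ) (A : Mat n) : ℝ := sInf (spectrum ℝ A)

/-- The largest (real) eigenvalue of a matrix. -/
def lamMax (n : ℕ) (A : Mat n) : ℝ := sSup (spectrum ℝ A)

end

section SqrtCompat
open scoped MatrixOrder

noncomputable def Matrix.PosSemidef.sqrt {n : ℕ} {A : Mat n} (_hA : A.PosSemidef) : Mat n := CFC.sqrt A

lemma Matrix.PosSemidef.sq_sqrt {n : ℕ} {A : Mat n} (hA : A.PosSemidef) : hA.sqrt ^ 2 = A :=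
  CFC.sq_sqrt A hA.nonneg

lemma Matrix.PosSemidef.posSemidef_sqrt {n : ℕ} {A : Mat n} (hA : A.PosSemidef) :
    hA.sqrt.PosSemidef :=
  (CFC.sqrt_nonneg A).posSemidef

end SqrtCompat

section AuxLemmas
open Matrix
set_option linter.unusedSectionVars false

variable {n : ℕ}

lemma psd_smul {A : Mat n} (hA : A.PosSemidef) {c : ℝ} (hc : 0 ≤ c) :
    (c • A).PosSemidef := by
  refine Matrix.PosSemidef.of_dotProduct_mulVec_nonneg ?_ fun x => ?_
  · unfold Matrix.IsHermitian
    rw [conjTranspose_smul, hA.1]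
    simp
  · have := hA.dotProduct_mulVec_nonneg x
    simp only [smul_mulVec, dotProduct_smul, smul_eq_mul]
    positivity

lemma pd_smul {A : Mat n} (hA : A.PosDef) {c : ℝ} (hc : 0 < c) :
    (c • A).PosDef := by
  refine Matrix.PosDef.of_dotProduct_mulVec_pos (psd_smul hA.posSemidef hc.le).1 fun x hx => ?_
  have := hA.dotProduct_mulVec_pos hx
  simp only [smul_mulVec, dotProduct_smul, smul_eq_mul]
  positivity

lemma psd_conj {A P : Mat n} (hA : A.PosSemidef) (hP : P.IsHermitian) :
    (P * A * P).PosSemidef := by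
  have := hA.conjTranspose_mul_mul_same (B := P)
  rwa [hP] at this

section Inv
variable {Y : Mat n} (hY : Y.PosDef)

lemma sqrt_det_ne (hY : Y.PosDef) : (hY.posSemidef.sqrt).det ≠ 0 := by
  intro h
  have h2 : (hY.posSemidef.sqrt * hY.posSemidef.sqrt).det = 0 := by
    rw [det_mul, h, mul_zero]
  rw [← pow_two, hY.posSemidef.sq_sqrt] at h2
  exact hY.det_pos.ne' h2

/-- If `Y` is positive definite and `Y ≤ r•1`, then `r⁻¹•1 ≤ Y⁻¹`. -/
lemma inv_loewner_upper (hY : Y.PosDef) {r : ℝ} (hr : 0 < r)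
    (h : ((r • 1 : Mat n) - Y).PosSemidef) : (Y⁻¹ - r⁻¹ • 1).PosSemidef := by
  classical
  set Z := hY.posSemidef.sqrt with hZ
  have hZZ : Z * Z = Y := by rw [← pow_two]; exact hY.posSemidef.sq_sqrt
  have hZH : Z.IsHermitian := hY.posSemidef.posSemidef_sqrt.isHermitian
  have hdet : Z.det ≠ 0 := sqrt_det_ne hY
  have hZiH : (Z⁻¹).IsHermitian := by
    unfold Matrix.IsHermitian
    rw [conjTranspose_nonsing_inv, hZH]
  have hconj : (Z⁻¹ * ((r • 1 : Mat n) - Y) * Z⁻¹).PosSemidef := psd_conj h hZiH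
  have hid : Z⁻¹ * Y * Z⁻¹ = 1 := by
    rw [← hZZ, ← mul_assoc, mul_assoc (Z⁻¹) Z Z, ← mul_assoc (Z⁻¹),
      nonsing_inv_mul Z (isUnit_iff_ne_zero.2 hdet), one_mul,
      mul_nonsing_inv Z (isUnit_iff_ne_zero.2 hdet)]
  have hinv : Z⁻¹ * Z⁻¹ = Y⁻¹ := by rw [← Matrix.mul_inv_rev, hZZ]
  have hsc : Z⁻¹ * ((r • 1 : Mat n)) * Z⁻¹ = r • Y⁻¹ := by
    rw [Matrix.mul_smul, Matrix.smul_mul, mul_one, hinv]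
  have : (r • Y⁻¹ - 1 : Mat n).PosSemidef := by
    have e : Z⁻¹ * ((r • 1 : Mat n) - Y) * Z⁻¹ = r • Y⁻¹ - 1 := by
      rw [Matrix.mul_sub, Matrix.sub_mul, hsc, hid]
    rwa [e] at hconj
  have := psd_smul this (c := r⁻¹) (by positivity)
  have e : r⁻¹ • (r • Y⁻¹ - 1 : Mat n) = Y⁻¹ - r⁻¹ • 1 := by
    rw [smul_sub, smul_smul, inv_mul_cancel₀ hr.ne', one_smul]
  rwa [e] at this

/-- If `Y` is positive definite and `c•1 ≤ Y` with `0 < c`, then `Y⁻¹ ≤ c⁻¹•1`. -/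
lemma inv_loewner_lower (hY : Y.PosDef) {c : ℝ} (hc : 0 < c)
    (h : (Y - (c • 1 : Mat n)).PosSemidef) : ((c⁻¹ • 1 : Mat n) - Y⁻¹).PosSemidef := by
  classical
  set Z := hY.posSemidef.sqrt with hZ
  have hZZ : Z * Z = Y := by rw [← pow_two]; exact hY.posSemidef.sq_sqrt
  have hZH : Z.IsHermitian := hY.posSemidef.posSemidef_sqrt.isHermitian
  have hdet : Z.det ≠ 0 := sqrt_det_ne hY
  have hZiH : (Z⁻¹).IsHermitian := by
    unfold Matrix.IsHermitian
    rw [conjTranspose_nonsing_inv, hZH]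
  have hconj : (Z⁻¹ * (Y - (c • 1 : Mat n)) * Z⁻¹).PosSemidef := psd_conj h hZiH
  have hid : Z⁻¹ * Y * Z⁻¹ = 1 := by
    rw [← hZZ, ← mul_assoc, mul_assoc (Z⁻¹) Z Z, ← mul_assoc (Z⁻¹),
      nonsing_inv_mul Z (isUnit_iff_ne_zero.2 hdet), one_mul,
      mul_nonsing_inv Z (isUnit_iff_ne_zero.2 hdet)]
  have hinv : Z⁻¹ * Z⁻¹ = Y⁻¹ := by rw [← Matrix.mul_inv_rev, hZZ]
  have hsc : Z⁻¹ * ((c • 1 : Mat n)) * Z⁻¹ = c • Y⁻¹ := by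
    rw [Matrix.mul_smul, Matrix.smul_mul, mul_one, hinv]
  have h1 : (1 - c • Y⁻¹ : Mat n).PosSemidef := by
    have e : Z⁻¹ * (Y - (c • 1 : Mat n)) * Z⁻¹ = 1 - c • Y⁻¹ := by
      rw [Matrix.mul_sub, Matrix.sub_mul, hsc, hid]
    rwa [e] at hconj
  have := psd_smul h1 (c := c⁻¹) (by positivity)
  have e : c⁻¹ • (1 - c • Y⁻¹ : Mat n) = (c⁻¹ • 1 : Mat n) - Y⁻¹ := by
    rw [smul_sub, smul_smul, inv_mul_cancel₀ hc.ne', one_smul]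
  rwa [e] at this

end Inv

section Eig
variable {B : Mat n} (hB : B.IsHermitian)

lemma evec_dot (i : Fin n) :
    (⇑(hB.eigenvectorBasis i) : Fin n → ℝ) ⬝ᵥ ⇑(hB.eigenvectorBasis i) = 1 := by
  have h1 : ‖hB.eigenvectorBasis i‖ = 1 := hB.eigenvectorBasis.orthonormal.1 i
  have h2 : (inner ℝ (hB.eigenvectorBasis i) (hB.eigenvectorBasis i) : ℝ)
      = ‖hB.eigenvectorBasis i‖ ^ 2 := real_inner_self_eq_norm_sq _
  rw [h1] at h2
  rw [show ((⇑(hB.eigenvectorBasis i) : Fin n → ℝ) ⬝ᵥ ⇑(hB.eigenvectorBasis i))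
      = (inner ℝ (hB.eigenvectorBasis i) (hB.eigenvectorBasis i) : ℝ) from ?_, h2]
  · norm_num
  · rw [PiLp.inner_apply]
    simp [dotProduct, mul_comm, pow_two]

lemma eig_le {r : ℝ} (h : ((r • 1 : Mat n) - B).PosSemidef) (i : Fin n) :
    hB.eigenvalues i ≤ r := by
  have hq := h.dotProduct_mulVec_nonneg (⇑(hB.eigenvectorBasis i))
  rw [sub_mulVec, dotProduct_sub, hB.mulVec_eigenvectorBasis] at hq
  simp only [smul_mulVec, one_mulVec, dotProduct_smul, smul_eq_mul,
    star_trivial] at hq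
  rw [evec_dot hB i] at hq
  simpa using hq

lemma eig_ge {c : ℝ} (h : (B - (c • 1 : Mat n)).PosSemidef) (i : Fin n) :
    c ≤ hB.eigenvalues i := by
  have hq := h.dotProduct_mulVec_nonneg (⇑(hB.eigenvectorBasis i))
  rw [sub_mulVec, dotProduct_sub, hB.mulVec_eigenvectorBasis] at hq
  simp only [smul_mulVec, one_mulVec, dotProduct_smul, smul_eq_mul,
    star_trivial] at hq
  rw [evec_dot hB i] at hq
  simpa using hq

lemma trace_sq : (B * B).trace = ∑ i, (hB.eigenvalues i) ^ 2 := by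
  classical
  set U : Mat n := (hB.eigenvectorUnitary : Mat n) with hU
  set D : Mat n := Matrix.diagonal (RCLike.ofReal ∘ hB.eigenvalues) with hD
  have hsp : B = U * D * star U := hB.spectral_theorem
  have hUU : star U * U = 1 := Unitary.coe_star_mul_self hB.eigenvectorUnitary
  have : B * B = U * (D * D) * star U := by
    rw [hsp]
    rw [show U * D * star U * (U * D * star U) = U * D * (star U * U) * D * star U by
      simp only [Matrix.mul_assoc], hUU]
    simp only [Matrix.mul_one, Matrix.mul_assoc]
  rw [this, Matrix.trace_mul_cycle, ← Matrix.mul_assoc, hUU, Matrix.one_mul]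
  rw [Matrix.diagonal_mul_diagonal, Matrix.trace_diagonal]
  simp [RCLike.ofReal_real_eq_id, pow_two]

lemma det_prod : B.det = ∏ i, hB.eigenvalues i := by
  have := hB.det_eq_prod_eigenvalues
  simpa [RCLike.ofReal_real_eq_id] using this

end Eig

lemma pd_conj {A P : Mat n} (hA : A.PosDef) (hP : P.IsHermitian) (hPdet : P.det ≠ 0) :
    (P * A * P).PosDef := by
  refine Matrix.PosDef.of_dotProduct_mulVec_pos (psd_conj hA.posSemidef hP).1 fun x hx => ?_
  have hPt : Pᵀ = P := by
    have := hP.eq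
    rwa [conjTranspose_eq_transpose_of_trivial] at this
  have hy : P *ᵥ x ≠ 0 := by
    intro hy0
    apply hx
    have : (P⁻¹ * P) *ᵥ x = P⁻¹ *ᵥ (P *ᵥ x) := by rw [← mulVec_mulVec]
    rw [nonsing_inv_mul P (isUnit_iff_ne_zero.2 hPdet), one_mulVec, hy0, mulVec_zero] at this
    exact this
  have h2 := hA.dotProduct_mulVec_pos hy
  have e : star x ⬝ᵥ ((P * A * P) *ᵥ x) = star (P *ᵥ x) ⬝ᵥ (A *ᵥ (P *ᵥ x)) := by
    simp only [star_trivial, ← mulVec_mulVec]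
    rw [dotProduct_mulVec x P, ← hPt, vecMul_transpose, hPt]
  rw [e]
  exact h2

set_option maxHeartbeats 1000000 in
lemma key {S H G : Mat n} (hS : S.PosSemidef) (hH : H.PosDef) (hG : G.PosDef)
    {t ε M δ D : ℝ} (ht : 0 < t) (ht1 : t ≤ 1) (hε : 0 < ε) (hM : 0 < M)
    (hδ : 0 < δ) (hD : 0 < D)
    (hlow : (H - ε • (1 : Mat n)).PosSemidef)
    (hup : ((M • 1 : Mat n) - (S + H)).PosSemidef)
    (hδG : δ ≤ G.det) (hDH : H.det ≤ D) :
    |(((S + t • H)⁻¹ * H) * ((S + t • H)⁻¹ * H)).trace *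
      Real.sqrt ((G⁻¹ * (S + t • H)).det)|
      ≤ ((n : ℝ) * Real.sqrt (D / δ) / Real.sqrt ((min (ε / M) 1) ^ (n - 1)))
        * ((1 / t) * Real.sqrt (1 / t)) := by
  classical
  set gt : Mat n := S + t • H with hgt_def
  have hgt : gt.PosDef := Matrix.PosDef.posSemidef_add hS (pd_smul hH ht)
  have hgtH : gt.IsHermitian := hgt.isHermitian
  have hgtiPD : (gt⁻¹).PosDef := hgt.inv
  -- square root of H
  set s : Mat n := hH.posSemidef.sqrt with hs_def
  have hss : s * s = H := by rw [← pow_two]; exact hH.posSemidef.sq_sqrt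
  have hsH : s.IsHermitian := hH.posSemidef.posSemidef_sqrt.isHermitian
  have hsdet : s.det ≠ 0 := sqrt_det_ne hH
  -- the symmetrized matrix
  set Bm : Mat n := s * gt⁻¹ * s with hBm_def
  have hBH : Bm.IsHermitian := by
    have e : Bm = sᴴ * gt⁻¹ * s := by rw [hsH.eq]
    rw [e]
    exact isHermitian_conjTranspose_mul_mul s hgtiPD.isHermitian
  -- upper eigenvalue bound : Bm ≤ t⁻¹ • 1
  have hub : ((t⁻¹ • 1 : Mat n) - Bm).PosSemidef := by
    set K : Mat n := Real.sqrt t • s with hK_def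
    have hKK : K * K = t • H := by
      rw [hK_def, Matrix.smul_mul, Matrix.mul_smul, smul_smul,
        Real.mul_self_sqrt ht.le, hss]
    have hKH : K.IsHermitian := by
      unfold Matrix.IsHermitian
      rw [hK_def, conjTranspose_smul, hsH.eq]
      simp
    have hKdet : K.det ≠ 0 := by
      rw [hK_def, det_smul]
      have : Real.sqrt t ≠ 0 := by positivity
      positivity
    have hKu : IsUnit K.det := isUnit_iff_ne_zero.2 hKdet
    have hKiH : (K⁻¹).IsHermitian := by
      unfold Matrix.IsHermitian
      rw [conjTranspose_nonsing_inv, hKH.eq]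
    have hidK : K⁻¹ * (K * K) * K⁻¹ = 1 := by
      rw [← Matrix.mul_assoc, Matrix.mul_assoc (K⁻¹) K K, ← Matrix.mul_assoc (K⁻¹),
        nonsing_inv_mul K hKu, Matrix.one_mul, mul_nonsing_inv K hKu]
    have hconjS : (K⁻¹ * S * K⁻¹).PosSemidef := psd_conj hS hKiH
    set Y : Mat n := K⁻¹ * gt * K⁻¹ with hY_def
    have hYpd : Y.PosDef := by
      apply pd_conj hgt hKiH
      rw [det_nonsing_inv]
      simp [Ring.inverse_eq_inv']
      exact hKdet
    have hY1 : (Y - ((1:ℝ) • 1 : Mat n)).PosSemidef := by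
      have e : K⁻¹ * S * K⁻¹ = Y - ((1:ℝ) • 1 : Mat n) := by
        have : S = gt - K * K := by rw [hKK, hgt_def]; abel
        rw [this, Matrix.mul_sub, Matrix.sub_mul, hidK, one_smul, hY_def]
      rwa [e] at hconjS
    have hinvY := inv_loewner_lower hYpd one_pos hY1
    have hKgtK : K * gt⁻¹ * K = t • Bm := by
      rw [hK_def, hBm_def, Matrix.smul_mul, Matrix.smul_mul, Matrix.mul_smul,
        smul_smul, Real.mul_self_sqrt ht.le]
    have hYinv : Y⁻¹ = t • Bm := by
      rw [hY_def, Matrix.mul_inv_rev, Matrix.mul_inv_rev,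
        nonsing_inv_nonsing_inv K hKu, ← Matrix.mul_assoc, hKgtK]
    rw [hYinv] at hinvY
    have := psd_smul hinvY (c := t⁻¹) (by positivity)
    have e2 : t⁻¹ • (((1:ℝ)⁻¹ • 1 : Mat n) - t • Bm) = (t⁻¹ • 1 : Mat n) - Bm := by
      rw [smul_sub, smul_smul, smul_smul, inv_mul_cancel₀ ht.ne']
      simp
    rwa [e2] at this
  -- lower eigenvalue bound : c0 • 1 ≤ Bm
  set c0 : ℝ := min (ε / M) 1 with hc0_def
  have hc0 : 0 < c0 := lt_min (by positivity) one_pos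
  have hc01 : c0 ≤ 1 := min_le_right _ _
  have hlb : (Bm - (c0 • 1 : Mat n)).PosSemidef := by
    have hMgt : ((M • 1 : Mat n) - gt).PosSemidef := by
      have h1 : ((1 - t) • H).PosSemidef := psd_smul hH.posSemidef (by linarith)
      have e : (M • 1 : Mat n) - gt = ((M • 1 : Mat n) - (S + H)) + (1 - t) • H := by
        rw [hgt_def, sub_smul, one_smul]; abel
      rw [e]
      exact hup.add h1
    have h2 := inv_loewner_upper hgt hM hMgt
    have h3 : (s * (gt⁻¹ - M⁻¹ • (1 : Mat n)) * s).PosSemidef := psd_conj h2 hsH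
    have e3 : s * (gt⁻¹ - M⁻¹ • (1 : Mat n)) * s = Bm - M⁻¹ • H := by
      rw [Matrix.mul_sub, Matrix.sub_mul, Matrix.mul_smul, Matrix.smul_mul,
        Matrix.mul_one, hss, hBm_def]
    rw [e3] at h3
    have h4 : (M⁻¹ • (H - ε • (1 : Mat n))).PosSemidef := psd_smul hlow (by positivity)
    have h5 := h3.add h4
    have e5 : Bm - M⁻¹ • H + M⁻¹ • (H - ε • (1 : Mat n)) = Bm - (ε / M) • (1 : Mat n) := by
      rw [smul_sub, smul_smul]
      rw [show M⁻¹ * ε = ε / M by ring]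
      abel
    rw [e5] at h5
    have h6 : (((ε / M - c0)) • (1 : Mat n)).PosSemidef :=
      psd_smul Matrix.PosSemidef.one (by simp [hc0_def])
    have h7 := h5.add h6
    have e7 : Bm - (ε / M) • (1 : Mat n) + (ε / M - c0) • (1 : Mat n)
        = Bm - c0 • (1 : Mat n) := by
      rw [sub_smul]; abel
    rwa [e7] at h7
  -- eigenvalues
  set a : Fin n → ℝ := hBH.eigenvalues with ha_def
  have hai_le : ∀ i, a i ≤ t⁻¹ := fun i => eig_le hBH hub i
  have hai_ge : ∀ i, c0 ≤ a i := fun i => eig_ge hBH hlb i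
  have hai_pos : ∀ i, 0 < a i := fun i => lt_of_lt_of_le hc0 (hai_ge i)
  -- trace identity
  have htr : (((gt)⁻¹ * H) * ((gt)⁻¹ * H)).trace = ∑ i, (a i) ^ 2 := by
    have e1 : ((gt)⁻¹ * H) * ((gt)⁻¹ * H) = (gt⁻¹ * s) * (s * gt⁻¹ * s * s) := by
      rw [← hss]; simp only [Matrix.mul_assoc]
    rw [e1, Matrix.trace_mul_comm]
    have e2 : (s * gt⁻¹ * s * s) * (gt⁻¹ * s) = Bm * Bm := by
      rw [hBm_def]; simp only [Matrix.mul_assoc]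
    rw [e2]
    exact trace_sq hBH
  -- determinant identities
  have hdetBm : Bm.det = ∏ i, a i := det_prod hBH
  have hP : 0 < ∏ i, a i := Finset.prod_pos fun i _ => hai_pos i
  have hdetgt : gt.det = H.det / Bm.det := by
    have : Bm.det = s.det * (gt.det)⁻¹ * s.det := by
      rw [hBm_def, det_mul, det_mul, det_nonsing_inv, Ring.inverse_eq_inv']
    have hsd : s.det * s.det = H.det := by rw [← det_mul, hss]
    rw [this]
    field_simp
    nlinarith [hgt.det_pos, hsd]
  have hdetG : (G⁻¹ * gt).det = (G.det)⁻¹ * (H.det / ∏ i, a i) := by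
    rw [det_mul, det_nonsing_inv, Ring.inverse_eq_inv', hdetgt, hdetBm]
  -- now the scalar estimate
  rw [htr, hdetG]
  have hGpos := hG.det_pos
  have hHpos := hH.det_pos
  have hsum_nonneg0 : (0:ℝ) ≤ ∑ i, (a i) ^ 2 := Finset.sum_nonneg fun i _ => sq_nonneg _
  rw [abs_of_nonneg (mul_nonneg hsum_nonneg0 (Real.sqrt_nonneg _))]
  -- bound the sqrt factor
  have hsqrt1 : Real.sqrt ((G.det)⁻¹ * (H.det / ∏ i, a i))
      ≤ Real.sqrt (D / δ) * Real.sqrt (∏ i, a i)⁻¹ := by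
    rw [← Real.sqrt_mul (by positivity)]
    apply Real.sqrt_le_sqrt
    rw [show (G.det)⁻¹ * (H.det / ∏ i, a i) = (H.det / G.det) * (∏ i, a i)⁻¹ by ring]
    have : H.det / G.det ≤ D / δ := div_le_div₀ hD.le hDH hδ hδG
    exact mul_le_mul_of_nonneg_right this (by positivity)
  have hsum_nonneg : (0:ℝ) ≤ ∑ i, (a i) ^ 2 := Finset.sum_nonneg fun i _ => sq_nonneg _
  calc (∑ i, (a i) ^ 2) * Real.sqrt ((G.det)⁻¹ * (H.det / ∏ i, a i))
      ≤ (∑ i, (a i) ^ 2) * (Real.sqrt (D / δ) * Real.sqrt (∏ i, a i)⁻¹) :=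
        mul_le_mul_of_nonneg_left hsqrt1 hsum_nonneg
    _ = Real.sqrt (D / δ) * ((∑ i, (a i) ^ 2) * Real.sqrt (∏ i, a i)⁻¹) := by ring
    _ ≤ Real.sqrt (D / δ) *
        ((n : ℝ) * (t⁻¹ * Real.sqrt t⁻¹ / Real.sqrt (c0 ^ (n - 1)))) := by
        apply mul_le_mul_of_nonneg_left _ (Real.sqrt_nonneg _)
        -- per-term bound
        have hper : ∀ i : Fin n, (a i) ^ 2 * Real.sqrt (∏ j, a j)⁻¹
            ≤ t⁻¹ * Real.sqrt t⁻¹ / Real.sqrt (c0 ^ (n - 1)) := by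
          intro i
          have hprod_ge : c0 ^ (n - 1) * a i ≤ ∏ j, a j := by
            rw [← Finset.mul_prod_erase Finset.univ a (Finset.mem_univ i)]
            have hcard : (Finset.univ.erase i).card = n - 1 := by
              rw [Finset.card_erase_of_mem (Finset.mem_univ i), Finset.card_univ,
                Fintype.card_fin]
            have : c0 ^ (n-1) ≤ ∏ j ∈ Finset.univ.erase i, a j := by
              rw [← hcard, ← Finset.prod_const]
              exact Finset.prod_le_prod (fun j _ => hc0.le) (fun j _ => hai_ge j)
            calc c0 ^ (n-1) * a i ≤ (∏ j ∈ Finset.univ.erase i, a j) * a i :=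
                  mul_le_mul_of_nonneg_right this (hai_pos i).le
              _ = a i * ∏ j ∈ Finset.univ.erase i, a j := by ring
          have hinv_le : (∏ j, a j)⁻¹ ≤ (c0 ^ (n - 1) * a i)⁻¹ := by
            apply inv_anti₀ (mul_pos (pow_pos hc0 _) (hai_pos i)) hprod_ge
          have hs2 : Real.sqrt (∏ j, a j)⁻¹ ≤
              Real.sqrt (c0 ^ (n-1))⁻¹ * Real.sqrt (a i)⁻¹ := by
            rw [← Real.sqrt_mul (by positivity), ← mul_inv]
            exact Real.sqrt_le_sqrt hinv_le
          calc (a i) ^ 2 * Real.sqrt (∏ j, a j)⁻¹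
              ≤ (a i) ^ 2 * (Real.sqrt (c0 ^ (n-1))⁻¹ * Real.sqrt (a i)⁻¹) :=
                mul_le_mul_of_nonneg_left hs2 (sq_nonneg _)
            _ = (a i ^ 2 * Real.sqrt (a i)⁻¹) * Real.sqrt (c0 ^ (n-1))⁻¹ := by ring
            _ = (a i * Real.sqrt (a i)) * Real.sqrt (c0 ^ (n-1))⁻¹ := by
                congr 1
                rw [Real.sqrt_inv]
                have hsa : Real.sqrt (a i) > 0 := Real.sqrt_pos.2 (hai_pos i)
                field_simp
                nlinarith [Real.mul_self_sqrt (hai_pos i).le]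
            _ ≤ (t⁻¹ * Real.sqrt t⁻¹) * Real.sqrt (c0 ^ (n-1))⁻¹ := by
                apply mul_le_mul_of_nonneg_right _ (Real.sqrt_nonneg _)
                exact mul_le_mul (hai_le i) (Real.sqrt_le_sqrt (hai_le i))
                  (Real.sqrt_nonneg _) (by positivity)
            _ = t⁻¹ * Real.sqrt t⁻¹ / Real.sqrt (c0 ^ (n-1)) := by
                rw [Real.sqrt_inv (c0 ^ (n-1))]; ring
        calc (∑ i, (a i) ^ 2) * Real.sqrt (∏ j, a j)⁻¹
            = ∑ i, (a i) ^ 2 * Real.sqrt (∏ j, a j)⁻¹ := by rw [Finset.sum_mul]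
          _ ≤ ∑ _i : Fin n, (t⁻¹ * Real.sqrt t⁻¹ / Real.sqrt (c0 ^ (n-1))) :=
              Finset.sum_le_sum fun i _ => hper i
          _ = (n : ℝ) * (t⁻¹ * Real.sqrt t⁻¹ / Real.sqrt (c0 ^ (n-1))) := by
              rw [Finset.sum_const, Finset.card_univ, Fintype.card_fin, nsmul_eq_mul]
    _ = ((n : ℝ) * Real.sqrt (D / δ) / Real.sqrt (c0 ^ (n - 1)))
        * ((1 / t) * Real.sqrt (1 / t)) := by
        rw [one_div]; ring

variable {X : Type*} [TopologicalSpace X] [CompactSpace X]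

lemma cont_inv {k : X → Mat n} (hk : Continuous k) (hdet : ∀ x, (k x).det ≠ 0) :
    Continuous fun x => (k x)⁻¹ := by
  rw [continuous_iff_continuousAt]
  intro x
  have h1 : ContinuousAt Ring.inverse (k x).det := by
    rw [Ring.inverse_eq_inv']
    exact continuousAt_inv₀ (hdet x)
  exact (continuousAt_matrix_inv (k x) h1).comp hk.continuousAt

lemma quad_to_psd {A : Mat n} (hA : A.IsHermitian) {C : ℝ}
    (h : ∀ v : Fin n → ℝ, v ⬝ᵥ (A *ᵥ v) ≤ C * (v ⬝ᵥ v)) :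
    ((C • 1 : Mat n) - A).PosSemidef := by
  refine Matrix.PosSemidef.of_dotProduct_mulVec_nonneg ?_ ?_
  · unfold Matrix.IsHermitian
    rw [conjTranspose_sub, conjTranspose_smul, conjTranspose_one, hA.eq]
    simp
  · intro v
    have := h v
    rw [sub_mulVec, dotProduct_sub]
    simp only [star_trivial, smul_mulVec, one_mulVec, dotProduct_smul, smul_eq_mul]
    linarith

lemma unif {k : X → Mat n} (hk : Continuous k) :
    ∃ C : ℝ, 0 < C ∧ ∀ (x : X) (v : Fin n → ℝ), v ⬝ᵥ (k x *ᵥ v) ≤ C * (v ⬝ᵥ v) := by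
  classical
  set m : X → ℝ := fun x => ∑ i, ∑ j, |k x i j| with hm
  have hmc : Continuous m := by
    apply continuous_finset_sum
    intro i _
    apply continuous_finset_sum
    intro j _
    exact (hk.matrix_elem i j).abs
  have key : ∀ (x : X) (v : Fin n → ℝ), v ⬝ᵥ (k x *ᵥ v) ≤ m x * (v ⬝ᵥ v) := by
    intro x v
    have hS : (0:ℝ) ≤ v ⬝ᵥ v := by
      apply Finset.sum_nonneg
      intro i _
      exact mul_self_nonneg _
    have hsq : ∀ i, v i * v i ≤ v ⬝ᵥ v := by
      intro i
      exact Finset.single_le_sum (f := fun j => v j * v j)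
        (fun j _ => mul_self_nonneg _) (Finset.mem_univ i)
    have habs : ∀ i j : Fin n, |v i| * |v j| ≤ v ⬝ᵥ v := by
      intro i j
      nlinarith [hsq i, hsq j, abs_nonneg (v i), abs_nonneg (v j), sq_abs (v i), sq_abs (v j),
        sq_nonneg (|v i| - |v j|)]
    have e : v ⬝ᵥ (k x *ᵥ v) = ∑ i, ∑ j, v i * (k x i j * v j) := by
      simp only [dotProduct, Matrix.mulVec, Finset.mul_sum]
    rw [e, hm, Finset.sum_mul]
    apply Finset.sum_le_sum
    intro i _
    rw [Finset.sum_mul]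
    apply Finset.sum_le_sum
    intro j _
    calc v i * (k x i j * v j) ≤ |v i * (k x i j * v j)| := le_abs_self _
      _ = |k x i j| * (|v i| * |v j|) := by rw [abs_mul, abs_mul]; ring
      _ ≤ |k x i j| * (v ⬝ᵥ v) := by
          exact mul_le_mul_of_nonneg_left (habs i j) (abs_nonneg _)
  rcases isEmpty_or_nonempty X with hX | hX
  · exact ⟨1, one_pos, fun x => (IsEmpty.false x).elim⟩
  · obtain ⟨x₀, -, hx₀⟩ := isCompact_univ.exists_isMaxOn Set.univ_nonempty hmc.continuousOn
    refine ⟨m x₀ + 1, ?_, fun x v => ?_⟩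
    · have : 0 ≤ m x₀ := Finset.sum_nonneg fun i _ =>
        Finset.sum_nonneg fun j _ => abs_nonneg _
      linarith
    · have h1 := key x v
      have h2 : m x * (v ⬝ᵥ v) ≤ (m x₀ + 1) * (v ⬝ᵥ v) := by
        apply mul_le_mul_of_nonneg_right _ (Finset.sum_nonneg fun i _ => mul_self_nonneg _)
        have h3 : m x ≤ m x₀ := hx₀ (Set.mem_univ x)
        linarith
      linarith


end AuxLemmas

open MeasureTheory

/-- Let `X` be a compact space with a finite Borel measure `μ`, `g, h : X → Pₙ`
continuous, and `g₀ : X → Sₙ` continuous with positive semidefinite values.  For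
`t ∈ (0,1]` set `g_t(x) := g₀(x) + t h(x)`.  Then the improper integral
`∫₀¹ (∫_X tr((g_t(x)⁻¹ h(x))²) √(det (g(x)⁻¹ g_t(x))) dμ(x))^{1/2} dt` is finite,
i.e. the integrand is integrable on `(0,1]`. -/
theorem stmt_13 {X : Type*} [TopologicalSpace X] [CompactSpace X]
    [MeasurableSpace X] [BorelSpace X] (μ : Measure X) [IsFiniteMeasure μ]
    (n : ℕ) (hn : 1 ≤ n) (g h g₀ : X → Mat n)
    (hg : Continuous g) (hh : Continuous h) (hg₀ : Continuous g₀)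
    (hgP : ∀ x, InP n (g x)) (hhP : ∀ x, InP n (h x))
    (hg₀S : ∀ x, (g₀ x).IsSymm) (hg₀P : ∀ x, (g₀ x).PosSemidef) :
    IntegrableOn
      (fun t : ℝ => Real.sqrt (∫ x,
        (((g₀ x + t • h x)⁻¹ * h x) * ((g₀ x + t • h x)⁻¹ * h x)).trace *
          Real.sqrt (((g x)⁻¹ * (g₀ x + t • h x)).det) ∂μ))
      (Set.Ioc (0:ℝ) 1) MeasureTheory.volume := by
  classical
  rcases isEmpty_or_nonempty X with hX | hX
  · have hμ : μ = 0 := Subsingleton.elim μ 0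
    rw [hμ]
    simp only [MeasureTheory.integral_zero_measure, Real.sqrt_zero]
    exact integrableOn_const measure_Ioc_lt_top.ne
  have hgdet : ∀ x, 0 < (g x).det := fun x => (hgP x).2.det_pos
  have hhdet : ∀ x, 0 < (h x).det := fun x => (hhP x).2.det_pos
  obtain ⟨M, hM, hMb⟩ := unif (hg₀.add hh)
  have hMb' : ∀ x : X, ((M • 1 : Mat n) - (g₀ x + h x)).PosSemidef := fun x =>
    quad_to_psd ((hg₀P x).isHermitian.add (hhP x).2.isHermitian) (hMb x)
  have hinvcont : Continuous fun x => (h x)⁻¹ := cont_inv hh fun x => (hhdet x).ne'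
  obtain ⟨Ci, hCi, hCib⟩ := unif hinvcont
  set ε : ℝ := Ci⁻¹ with hε_def
  have hε : 0 < ε := by positivity
  have hεb : ∀ x : X, (h x - ε • (1 : Mat n)).PosSemidef := by
    intro x
    have h1 : ((Ci • 1 : Mat n) - (h x)⁻¹).PosSemidef :=
      quad_to_psd ((hhP x).2.inv).isHermitian (hCib x)
    have h2 := inv_loewner_upper ((hhP x).2.inv) hCi h1
    rwa [nonsing_inv_nonsing_inv _ (isUnit_iff_ne_zero.2 (hhdet x).ne')] at h2
  obtain ⟨xδ, -, hxδ⟩ :=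
    isCompact_univ.exists_isMinOn Set.univ_nonempty (hg.matrix_det).continuousOn
  set δ : ℝ := (g xδ).det with hδ_def
  have hδ : 0 < δ := hgdet xδ
  have hδb : ∀ x : X, δ ≤ (g x).det := fun x => hxδ (Set.mem_univ x)
  obtain ⟨xD, -, hxD⟩ :=
    isCompact_univ.exists_isMaxOn Set.univ_nonempty (hh.matrix_det).continuousOn
  set D : ℝ := (h xD).det with hD_def
  have hD : 0 < D := hhdet xD
  have hDb : ∀ x : X, (h x).det ≤ D := fun x => hxD (Set.mem_univ x)
  set C1 : ℝ := (n : ℝ) * Real.sqrt (D / δ) / Real.sqrt ((min (ε / M) 1) ^ (n - 1)) with hC1_def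
  have hC1 : 0 ≤ C1 := by positivity
  set F : ℝ → X → ℝ := fun t x =>
    (((g₀ x + t • h x)⁻¹ * h x) * ((g₀ x + t • h x)⁻¹ * h x)).trace *
      Real.sqrt (((g x)⁻¹ * (g₀ x + t • h x)).det) with hF_def
  have hkey : ∀ t : ℝ, 0 < t → t ≤ 1 → ∀ x, |F t x| ≤ C1 * ((1/t) * Real.sqrt (1/t)) :=
    fun t ht ht1 x => key (hg₀P x) (hhP x).2 (hgP x).2 ht ht1 hε hM hδ hD
      (hεb x) (hMb' x) (hδb x) (hDb x)
  have hgtPD : ∀ (t : ℝ), 0 < t → ∀ x : X, (g₀ x + t • h x).PosDef := fun t ht x =>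
    Matrix.PosDef.posSemidef_add (hg₀P x) (pd_smul (hhP x).2 ht)
  have hFcont : ∀ (t : ℝ), 0 < t → Continuous (F t) := by
    intro t ht
    have h1 : Continuous fun x => g₀ x + t • h x := hg₀.add (hh.const_smul t)
    have h2 : Continuous fun x => (g₀ x + t • h x)⁻¹ :=
      cont_inv h1 fun x => ((hgtPD t ht x).det_pos).ne'
    have h3 : Continuous fun x => (g x)⁻¹ := cont_inv hg fun x => (hgdet x).ne'
    exact (((h2.matrix_mul hh).matrix_mul (h2.matrix_mul hh)).matrix_trace).mul
      (((h3.matrix_mul h1).matrix_det).sqrt)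
  have hFint : ∀ (t : ℝ), 0 < t → Integrable (F t) μ := by
    intro t ht
    apply (hFcont t ht).integrable_of_hasCompactSupport
    exact IsCompact.of_isClosed_subset isCompact_univ (isClosed_tsupport _) (Set.subset_univ _)
  have hIbound : ∀ t : ℝ, 0 < t → t ≤ 1 →
      (∫ x, F t x ∂μ) ≤ (μ Set.univ).toReal * (C1 * ((1/t) * Real.sqrt (1/t))) := by
    intro t ht ht1
    calc ∫ x, F t x ∂μ ≤ ∫ _x, C1 * ((1/t) * Real.sqrt (1/t)) ∂μ :=
          integral_mono (hFint t ht) (integrable_const _)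
            (fun x => le_of_abs_le (hkey t ht ht1 x))
      _ = (μ Set.univ).toReal * (C1 * ((1/t) * Real.sqrt (1/t))) := by
          rw [integral_const, smul_eq_mul, measureReal_def]
  have hrpow : ∀ t : ℝ, 0 < t →
      Real.sqrt ((1/t) * Real.sqrt (1/t)) = t ^ (-(3/4 : ℝ)) := by
    intro t ht
    have hu : (0:ℝ) < 1/t := by positivity
    have e1 : (1/t) * Real.sqrt (1/t) = (1/t) ^ ((3:ℝ)/2) := by
      rw [Real.sqrt_eq_rpow]
      nth_rewrite 1 [show (1/t) = (1/t) ^ (1:ℝ) by rw [Real.rpow_one]]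
      rw [← Real.rpow_add hu]
      norm_num
    rw [e1, Real.sqrt_eq_rpow, ← Real.rpow_mul hu.le]
    rw [one_div, ← Real.rpow_neg_one t, ← Real.rpow_mul ht.le]
    norm_num
  set K : ℝ := Real.sqrt ((μ Set.univ).toReal * C1) with hK_def
  have hbound : ∀ t : ℝ, 0 < t → t ≤ 1 →
      ‖Real.sqrt (∫ x, F t x ∂μ)‖ ≤ K * t ^ (-(3/4:ℝ)) := by
    intro t ht ht1
    rw [Real.norm_eq_abs, abs_of_nonneg (Real.sqrt_nonneg _)]
    calc Real.sqrt (∫ x, F t x ∂μ)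
        ≤ Real.sqrt ((μ Set.univ).toReal * (C1 * ((1/t) * Real.sqrt (1/t)))) :=
          Real.sqrt_le_sqrt (hIbound t ht ht1)
      _ = K * Real.sqrt ((1/t) * Real.sqrt (1/t)) := by
          rw [hK_def, ← mul_assoc, ← Real.sqrt_mul (mul_nonneg ENNReal.toReal_nonneg hC1) _]
      _ = K * t ^ (-(3/4:ℝ)) := by rw [hrpow t ht]
  have hmeas : ContinuousOn (fun t => Real.sqrt (∫ x, F t x ∂μ)) (Set.Ioc (0:ℝ) 1) := by
    intro t₀ ht₀
    apply Real.continuous_sqrt.continuousAt.comp_continuousWithinAt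
    apply continuousWithinAt_of_dominated
      (bound := fun _ => C1 * ((2/t₀) * Real.sqrt (2/t₀)))
    · filter_upwards [self_mem_nhdsWithin] with t ht
      exact ((hFcont t ht.1).aestronglyMeasurable)
    · have hmem : Set.Ioi (t₀/2) ∈ nhdsWithin t₀ (Set.Ioc (0:ℝ) 1) :=
        nhdsWithin_le_nhds (Ioi_mem_nhds (by linarith [ht₀.1]))
      filter_upwards [self_mem_nhdsWithin, hmem] with t ht hthalf
      apply ae_of_all
      intro x
      rw [Real.norm_eq_abs]
      refine (hkey t ht.1 ht.2 x).trans ?_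
      apply mul_le_mul_of_nonneg_left _ hC1
      have ht₀2 : (0:ℝ) < t₀/2 := by linarith [ht₀.1]
      have e1 : 1/t ≤ 2/t₀ := by
        rw [div_le_div_iff₀ ht.1 (by linarith [ht₀.1])]
        have : t₀/2 < t := hthalf
        linarith
      exact mul_le_mul e1 (Real.sqrt_le_sqrt e1) (Real.sqrt_nonneg _) (div_nonneg (by norm_num) ht₀.1.le)
    · exact integrable_const _
    · apply ae_of_all
      intro x
      have h1 : Continuous fun t : ℝ => g₀ x + t • h x :=
        continuous_const.add (continuous_id.smul continuous_const)
      have h2 : ContinuousAt (fun t : ℝ => (g₀ x + t • h x)⁻¹) t₀ := by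
        apply ContinuousAt.comp _ h1.continuousAt
        apply continuousAt_matrix_inv
        rw [Ring.inverse_eq_inv']
        exact continuousAt_inv₀ ((hgtPD t₀ ht₀.1 x).det_pos).ne'
      have hW : ContinuousAt (fun t : ℝ => (g₀ x + t • h x)⁻¹ * h x) t₀ :=
        h2.mul continuousAt_const
      have hTr : ContinuousAt (fun t : ℝ =>
          (((g₀ x + t • h x)⁻¹ * h x) * ((g₀ x + t • h x)⁻¹ * h x)).trace) t₀ :=
        (continuous_id.matrix_trace).continuousAt.comp (hW.mul hW)
      have hDet : ContinuousAt (fun t : ℝ =>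
          Real.sqrt (((g x)⁻¹ * (g₀ x + t • h x)).det)) t₀ :=
        Real.continuous_sqrt.continuousAt.comp
          ((continuous_id.matrix_det).continuousAt.comp
            (continuousAt_const.mul h1.continuousAt))
      exact (hTr.mul hDet).continuousWithinAt
  have hboundInt : IntegrableOn (fun t : ℝ => K * t ^ (-(3/4:ℝ)))
      (Set.Ioc (0:ℝ) 1) volume := by
    rw [integrableOn_Ioc_iff_integrableOn_Ioo]
    exact ((intervalIntegral.integrableOn_Ioo_rpow_iff one_pos).2 (by norm_num)).const_mul K
  apply Integrable.mono' hboundInt (hmeas.aestronglyMeasurable measurableSet_Ioc)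
  rw [ae_restrict_iff' measurableSet_Ioc]
  apply ae_of_all
  intro t ht
  exact hbound t ht.1 ht.2
end
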